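/- Under the same setup, P(S₁' + X ≤ k₁, S₂' + Y ≤ k₂) ≤ P(S₁' + Y₁ ≤ k₁, S₂' + Y₂ ≤ k₂); that is, replacing the complementary pair (X, m−X) by an independent pair with the same marginals cannot decrease the joint lower-orthant probability. -/
import Mathlib


open MeasureTheory ProbabilityTheory Finset

lemma meas_mem_finset {Ω : Type*} [MeasureSpace Ω] {X : Ω → ℕ} (hmX : Measurable X)
    (s : Finset ℕ) : ℙ {ω | X ω ∈ s} = ∑ u ∈ s, ℙ {ω | X ω = u} := by
  classical
  have h : {ω | X ω ∈ s} = ⋃ u ∈ s, X ⁻¹' {u} := by ext ω; simp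
  rw [h, measure_biUnion_finset]
  · rfl
  · intro u _ v _ huv
    apply Set.disjoint_left.2
    intro ω h1 h2
    simp only [Set.mem_preimage, Set.mem_singleton_iff] at h1 h2
    exact huv (h1 ▸ h2)
  · exact fun u _ => hmX (measurableSet_singleton u)

lemma key_ineq {Ω : Type*} [MeasureSpace Ω] [IsProbabilityMeasure (ℙ : Measure Ω)]
    (m : ℕ) (p : ℕ → ℝ) (hp : ∀ u, 0 ≤ p u)
    (hsum : ∑ u ∈ Finset.range (m + 1), p u = 1)
    (X Y₁ Y₂ : Ω → ℕ) (hmX : Measurable X) (hmY₁ : Measurable Y₁) (hmY₂ : Measurable Y₂)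
    (hXm : ∀ ω, X ω ≤ m) (hY₁m : ∀ ω, Y₁ ω ≤ m) (hY₂m : ∀ ω, Y₂ ω ≤ m)
    (hXd : ∀ u ≤ m, (ℙ {ω | X ω = u}).toReal = p u)
    (hY₁d : ∀ u ≤ m, (ℙ {ω | Y₁ ω = u}).toReal = p u)
    (hY₂d : ∀ v ≤ m, (ℙ {ω | Y₂ ω = v}).toReal = p (m - v))
    (a b : ℕ) :
    ℙ {ω | X ω ≤ a ∧ m - X ω ≤ b} ≤ ℙ {ω | Y₁ ω ≤ a} * ℙ {ω | Y₂ ω ≤ b} := by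
  classical
  set t := min a m with ht
  set c := m - b with hc
  -- express the three probabilities as sums
  have hIe : {ω | X ω ≤ a ∧ m - X ω ≤ b} = {ω | X ω ∈ Finset.Icc c t} := by
    ext ω; have := hXm ω; simp only [Set.mem_setOf_eq, Finset.mem_Icc]; omega
  have hFe : {ω | Y₁ ω ≤ a} = {ω | Y₁ ω ∈ Finset.range (t + 1)} := by
    ext ω; have := hY₁m ω; simp only [Set.mem_setOf_eq, Finset.mem_range]; omega
  have hGe : {ω | Y₂ ω ≤ b} = {ω | Y₂ ω ∈ Finset.range (min b m + 1)} := by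
    ext ω; have := hY₂m ω; simp only [Set.mem_setOf_eq, Finset.mem_range]; omega
  rw [hIe, hFe, hGe, meas_mem_finset hmX, meas_mem_finset hmY₁, meas_mem_finset hmY₂]
  have hne : ∀ (s : Set Ω), ℙ s ≠ ⊤ := fun s => measure_ne_top _ _
  -- real values
  set I : ℝ := ∑ u ∈ Finset.Icc c t, p u with hIdef
  set F : ℝ := ∑ u ∈ Finset.range (t + 1), p u with hFdef
  set G : ℝ := ∑ u ∈ Finset.Icc c m, p u with hGdef
  have hItr : (∑ u ∈ Finset.Icc c t, ℙ {ω | X ω = u}).toReal = I := by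
    rw [ENNReal.toReal_sum (fun u _ => hne _)]
    exact Finset.sum_congr rfl fun u hu => hXd u (by simp [Finset.mem_Icc] at hu; omega)
  have hFtr : (∑ u ∈ Finset.range (t + 1), ℙ {ω | Y₁ ω = u}).toReal = F := by
    rw [ENNReal.toReal_sum (fun u _ => hne _)]
    exact Finset.sum_congr rfl fun u hu => hY₁d u (by simp [Finset.mem_range] at hu; omega)
  have hGtr : (∑ v ∈ Finset.range (min b m + 1), ℙ {ω | Y₂ ω = v}).toReal = G := by
    rw [ENNReal.toReal_sum (fun u _ => hne _)]
    rw [show (∑ v ∈ Finset.range (min b m + 1), (ℙ {ω | Y₂ ω = v}).toReal)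
        = ∑ v ∈ Finset.range (min b m + 1), p (m - v) from
      Finset.sum_congr rfl fun v hv => hY₂d v (by simp [Finset.mem_range] at hv; omega)]
    exact Finset.sum_nbij' (fun v => m - v) (fun u => m - u)
      (fun v hv => by simp_all [Finset.mem_range, Finset.mem_Icc]; omega)
      (fun u hu => by simp_all [Finset.mem_range, Finset.mem_Icc]; omega)
      (fun v hv => by simp_all [Finset.mem_range]; omega)
      (fun u hu => by simp_all [Finset.mem_Icc]; omega)
      (fun v hv => rfl)
  -- the real inequality
  have hsub1 : Finset.range (t + 1) ⊆ Finset.range (m + 1) := by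
    intro u; simp only [Finset.mem_range]; omega
  have hsub2 : Finset.Icc c m ⊆ Finset.range (m + 1) := by
    intro u; simp only [Finset.mem_Icc, Finset.mem_range]; omega
  have hF1 : F ≤ 1 := hsum ▸ Finset.sum_le_sum_of_subset_of_nonneg hsub1 (fun u _ _ => hp u)
  have hG1 : G ≤ 1 := hsum ▸ Finset.sum_le_sum_of_subset_of_nonneg hsub2 (fun u _ _ => hp u)
  have hF0 : 0 ≤ F := Finset.sum_nonneg fun u _ => hp u
  have hG0 : 0 ≤ G := Finset.sum_nonneg fun u _ => hp u
  have hkey : I ≤ F * G := by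
    rcases le_or_gt c t with hct | hct
    · have hun : Finset.range (t + 1) ∪ Finset.Icc c m = Finset.range (m + 1) := by
        ext u; simp only [Finset.mem_union, Finset.mem_range, Finset.mem_Icc]; omega
      have hin : Finset.range (t + 1) ∩ Finset.Icc c m = Finset.Icc c t := by
        ext u; simp only [Finset.mem_inter, Finset.mem_range, Finset.mem_Icc]; omega
      have := Finset.sum_union_inter (s₁ := Finset.range (t + 1)) (s₂ := Finset.Icc c m) (f := p)
      rw [hun, hin, hsum] at this
      nlinarith [mul_nonneg (sub_nonneg.2 hF1) (sub_nonneg.2 hG1)]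
    · have : Finset.Icc c t = ∅ := Finset.Icc_eq_empty (by omega)
      rw [hIdef, this, Finset.sum_empty]
      positivity
  -- back to ENNReal
  have hs1 : (∑ u ∈ Finset.Icc c t, ℙ {ω | X ω = u}) ≠ ⊤ :=
    (ENNReal.sum_lt_top.2 fun u _ => (hne _).lt_top).ne
  have hs2 : (∑ u ∈ Finset.range (t + 1), ℙ {ω | Y₁ ω = u}) ≠ ⊤ :=
    (ENNReal.sum_lt_top.2 fun u _ => (hne _).lt_top).ne
  have hs3 : (∑ v ∈ Finset.range (min b m + 1), ℙ {ω | Y₂ ω = v}) ≠ ⊤ :=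
    (ENNReal.sum_lt_top.2 fun u _ => (hne _).lt_top).ne
  rw [← ENNReal.toReal_le_toReal hs1 (ENNReal.mul_ne_top hs2 hs3),
    ENNReal.toReal_mul, hItr, hFtr, hGtr]
  exact hkey

theorem stmt6 {Ω : Type*} [MeasureSpace Ω] [IsProbabilityMeasure (ℙ : Measure Ω)]
    (m : ℕ) (hm : 1 ≤ m) (p : ℕ → ℝ) (hp : ∀ u, 0 ≤ p u)
    (hsum : ∑ u ∈ Finset.range (m + 1), p u = 1)
    (k₁ k₂ : ℕ)
    (S₁ S₂ X Y Y₁ Y₂ : Ω → ℕ)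
    (hmS₁ : Measurable S₁) (hmS₂ : Measurable S₂) (hmX : Measurable X)
    (hmY₁ : Measurable Y₁) (hmY₂ : Measurable Y₂)
    (hXm : ∀ ω, X ω ≤ m) (hY : ∀ ω, Y ω = m - X ω)
    (hY₁m : ∀ ω, Y₁ ω ≤ m) (hY₂m : ∀ ω, Y₂ ω ≤ m)
    (hXd : ∀ u ≤ m, (ℙ {ω | X ω = u}).toReal = p u)
    (hY₁d : ∀ u ≤ m, (ℙ {ω | Y₁ ω = u}).toReal = p u)
    (hY₂d : ∀ v ≤ m, (ℙ {ω | Y₂ ω = v}).toReal = p (m - v))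
    (hY₁Y₂ : IndepFun Y₁ Y₂ ℙ)
    (hSXY : IndepFun (fun ω => (S₁ ω, S₂ ω)) (fun ω => (X ω, Y ω)) ℙ)
    (hSY₁Y₂ : IndepFun (fun ω => (S₁ ω, S₂ ω)) (fun ω => (Y₁ ω, Y₂ ω)) ℙ) :
    ℙ {ω | S₁ ω + X ω ≤ k₁ ∧ S₂ ω + Y ω ≤ k₂}
      ≤ ℙ {ω | S₁ ω + Y₁ ω ≤ k₁ ∧ S₂ ω + Y₂ ω ≤ k₂} := by
  classical
  set T : Finset (ℕ × ℕ) := Finset.range (k₁ + 1) ×ˢ Finset.range (k₂ + 1) with hT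
  set B : ℕ × ℕ → Set (ℕ × ℕ) := fun q => {r | r.1 ≤ k₁ - q.1 ∧ r.2 ≤ k₂ - q.2} with hB
  have hBm : ∀ q, MeasurableSet (B q) := fun q => (Set.to_countable _).measurableSet
  have hdisj : ∀ (f g : Ω → ℕ × ℕ), (↑T : Set (ℕ × ℕ)).PairwiseDisjoint
      (fun q => f ⁻¹' {q} ∩ g ⁻¹' B q) := by
    intro f g q _ q' _ hqq'
    apply Set.disjoint_left.2
    intro ω h1 h2
    exact hqq' (h1.1.symm.trans h2.1)
  -- decomposition of LHS
  have hAe : {ω | S₁ ω + X ω ≤ k₁ ∧ S₂ ω + Y ω ≤ k₂}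
      = ⋃ q ∈ T, ((fun ω => (S₁ ω, S₂ ω)) ⁻¹' {q} ∩ (fun ω => (X ω, Y ω)) ⁻¹' B q) := by
    ext ω
    simp only [Set.mem_setOf_eq, Set.mem_iUnion, Set.mem_inter_iff, Set.mem_preimage,
      Set.mem_singleton_iff, hT, Finset.mem_product, Finset.mem_range, hB, Prod.ext_iff]
    constructor
    · rintro ⟨h1, h2⟩
      exact ⟨(S₁ ω, S₂ ω), ⟨by omega, by omega⟩, ⟨rfl, rfl⟩, by omega, by omega⟩
    · rintro ⟨q, ⟨hq1, hq2⟩, ⟨he1, he2⟩, h1, h2⟩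
      omega
  have hBe : {ω | S₁ ω + Y₁ ω ≤ k₁ ∧ S₂ ω + Y₂ ω ≤ k₂}
      = ⋃ q ∈ T, ((fun ω => (S₁ ω, S₂ ω)) ⁻¹' {q} ∩ (fun ω => (Y₁ ω, Y₂ ω)) ⁻¹' B q) := by
    ext ω
    simp only [Set.mem_setOf_eq, Set.mem_iUnion, Set.mem_inter_iff, Set.mem_preimage,
      Set.mem_singleton_iff, hT, Finset.mem_product, Finset.mem_range, hB, Prod.ext_iff]
    constructor
    · rintro ⟨h1, h2⟩
      exact ⟨(S₁ ω, S₂ ω), ⟨by omega, by omega⟩, ⟨rfl, rfl⟩, by omega, by omega⟩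
    · rintro ⟨q, ⟨hq1, hq2⟩, ⟨he1, he2⟩, h1, h2⟩
      omega
  have hmS : Measurable fun ω => (S₁ ω, S₂ ω) := hmS₁.prodMk hmS₂
  have hmXY : Measurable fun ω => (X ω, Y ω) := by
    have : Measurable Y := by
      have : Y = fun ω => m - X ω := funext hY
      rw [this]; exact (measurable_const.sub hmX)
    exact hmX.prodMk this
  have hmY₁Y₂ : Measurable fun ω => (Y₁ ω, Y₂ ω) := hmY₁.prodMk hmY₂
  rw [hAe, hBe, measure_biUnion_finset (hdisj _ _)
      (fun q _ => ((hmS (measurableSet_singleton q)).inter (hmXY (hBm q)))),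
    measure_biUnion_finset (hdisj _ _)
      (fun q _ => ((hmS (measurableSet_singleton q)).inter (hmY₁Y₂ (hBm q))))]
  apply Finset.sum_le_sum
  intro q _
  rw [hSXY.measure_inter_preimage_eq_mul _ _ (measurableSet_singleton q) (hBm q),
    hSY₁Y₂.measure_inter_preimage_eq_mul _ _ (measurableSet_singleton q) (hBm q)]
  apply mul_le_mul_right
  -- per-cell inequality
  have h1 : (fun ω => (X ω, Y ω)) ⁻¹' B q = {ω | X ω ≤ k₁ - q.1 ∧ m - X ω ≤ k₂ - q.2} := by
    ext ω; simp only [Set.mem_preimage, hB, Set.mem_setOf_eq, hY ω]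
  have h2 : (fun ω => (Y₁ ω, Y₂ ω)) ⁻¹' B q
      = Y₁ ⁻¹' {x | x ≤ k₁ - q.1} ∩ Y₂ ⁻¹' {x | x ≤ k₂ - q.2} := by
    ext ω; simp only [Set.mem_preimage, hB, Set.mem_setOf_eq, Set.mem_inter_iff]
  rw [h1, h2, hY₁Y₂.measure_inter_preimage_eq_mul _ _
    (Set.to_countable _).measurableSet (Set.to_countable _).measurableSet]
  exact key_ineq m p hp hsum X Y₁ Y₂ hmX hmY₁ hmY₂ hXm hY₁m hY₂m hXd hY₁d hY₂d _ _
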